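/- Let 1 < p < ∞. Every linear subspace of B(ℓ_p) that contains all finite rank operators on ℓ_p has the uniform ball-covering property; in particular, B(ℓ_p) has the uniform ball-covering property. -/

import Mathlib

open Metric ZeroAtInfty
open scoped ENNReal

/-- A normed space has the ball-covering property (BCP) if there is a countable family of
closed balls, none containing the origin (`0 < r n < ‖c n‖`), covering the unit sphere. -/
def HasBCP (X : Type*) [NormedAddCommGroup X] : Prop :=
  ∃ (c : ℕ → X) (r : ℕ → ℝ),
    (∀ n, 0 < r n ∧ r n < ‖c n‖) ∧
    sphere (0 : X) 1 ⊆ ⋃ n, closedBall (c n) (r n)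

/-- The strong ball-covering property: the radii are uniformly bounded above. -/
def HasSBCP (X : Type*) [NormedAddCommGroup X] : Prop :=
  ∃ (c : ℕ → X) (r : ℕ → ℝ),
    (∀ n, 0 < r n ∧ r n < ‖c n‖) ∧
    (∃ M : ℝ, ∀ n, r n ≤ M) ∧
    sphere (0 : X) 1 ⊆ ⋃ n, closedBall (c n) (r n)

/-- The uniform ball-covering property: strong BCP together with a closed ball around the
origin disjoint from all the balls of the covering. -/
def HasUBCP (X : Type*) [NormedAddCommGroup X] : Prop :=
  ∃ (c : ℕ → X) (r : ℕ → ℝ),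
    (∀ n, 0 < r n ∧ r n < ‖c n‖) ∧
    (∃ M : ℝ, ∀ n, r n ≤ M) ∧
    (∃ ρ : ℝ, 0 < ρ ∧ ∀ n, Disjoint (closedBall (0 : X) ρ) (closedBall (c n) (r n))) ∧
    sphere (0 : X) 1 ⊆ ⋃ n, closedBall (c n) (r n)

/-- A topological space has a countable π-basis if there is a countable family of nonempty
open sets such that every nonempty open set contains a member of the family. -/
def HasCountablePiBasis (K : Type*) [TopologicalSpace K] : Prop :=
  ∃ B : Set (Set K), B.Countable ∧ (∀ U ∈ B, IsOpen U ∧ U.Nonempty) ∧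
    ∀ V : Set K, IsOpen V → V.Nonempty → ∃ U ∈ B, U ⊆ V

set_option maxHeartbeats 1000000
set_option linter.unusedSectionVars false

open Metric ZeroAtInfty
open scoped ENNReal

noncomputable section UBCPaux

namespace UBCPaux

variable (p : ℝ≥0∞) [Fact (1 ≤ p)]

local notation "Hsp" => lp (fun _ : ℕ => ℝ) p

theorem p_ne_zero : p ≠ 0 := (lt_of_lt_of_le one_pos Fact.out).ne'

/-- Coordinate functional on `ℓ^p`. -/
def coordL (j : ℕ) : Hsp →L[ℝ] ℝ :=
  LinearMap.mkContinuous
    { toFun := fun f => f j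
      map_add' := fun f g => by simp [lp.coeFn_add]
      map_smul' := fun c f => by simp [lp.coeFn_smul] }
    1 (fun f => by
      change ‖f j‖ ≤ 1 * ‖f‖
      simpa using lp.norm_apply_le_norm (p_ne_zero p) f j)

@[simp] theorem coordL_apply (j : ℕ) (f : Hsp) : coordL p j f = f j := rfl

theorem norm_coordL_le (j : ℕ) : ‖coordL p j‖ ≤ 1 :=
  LinearMap.mkContinuous_norm_le _ zero_le_one _

/-- Truncation to the first `m` coordinates, as an operator. -/
def QL (m : ℕ) : Hsp →L[ℝ] Hsp :=
  ∑ i ∈ Finset.range m, (coordL p i).smulRight (lp.single p i 1)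

theorem QL_apply (m : ℕ) (u : Hsp) :
    QL p m u = ∑ i ∈ Finset.range m, lp.single p i (u i) := by
  simp only [QL, ContinuousLinearMap.sum_apply, ContinuousLinearMap.smulRight_apply,
    coordL_apply]
  refine Finset.sum_congr rfl fun i _ => ?_
  rw [← lp.single_smul]
  norm_num

theorem QL_coord (m : ℕ) (u : Hsp) (j : ℕ) :
    (QL p m u : ∀ _ : ℕ, ℝ) j = if j < m then u j else 0 := by
  rw [QL_apply, lp.coeFn_sum]
  simp only [Finset.sum_apply]
  by_cases h : j < m
  · rw [Finset.sum_eq_single_of_mem j (Finset.mem_range.2 h)]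
    · simp [lp.single_apply_self, h]
    · intro i _ hij
      exact lp.single_apply_ne p i _ (Ne.symm hij)
  · rw [if_neg h, Finset.sum_eq_zero]
    intro i hi
    refine lp.single_apply_ne p i _ ?_
    rintro rfl
    exact h (Finset.mem_range.1 hi)


section RealExp

theorem QL_QL {m₀ m : ℕ} (h : m₀ ≤ m) (u : Hsp) : QL p m₀ (QL p m u) = QL p m₀ u := by
  apply lp.ext
  funext j
  rw [QL_coord p m₀ (QL p m u) j, QL_coord p m₀ u j]
  by_cases hj : j < m₀
  · rw [if_pos hj, if_pos hj, QL_coord, if_pos (lt_of_lt_of_le hj h)]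
  · rw [if_neg hj, if_neg hj]

theorem norm_QL_sub_rpow (hP : 0 < p.toReal) (m : ℕ) (u : Hsp) :
    ‖u - QL p m u‖ ^ p.toReal = ‖u‖ ^ p.toReal - ∑ i ∈ Finset.range m, ‖u i‖ ^ p.toReal := by
  rw [QL_apply]
  exact lp.norm_compl_sum_single hP u (Finset.range m)

theorem norm_QL_sub_le (hP : 0 < p.toReal) (m : ℕ) (u : Hsp) : ‖u - QL p m u‖ ≤ ‖u‖ := by
  rw [← Real.rpow_le_rpow_iff (norm_nonneg _) (norm_nonneg _) hP, norm_QL_sub_rpow p hP]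
  have : (0:ℝ) ≤ ∑ i ∈ Finset.range m, ‖u i‖ ^ p.toReal :=
    Finset.sum_nonneg fun i _ => Real.rpow_nonneg (norm_nonneg _) _
  linarith

theorem norm_QL_le (hP : 0 < p.toReal) (m : ℕ) (u : Hsp) : ‖QL p m u‖ ≤ ‖u‖ := by
  rw [← Real.rpow_le_rpow_iff (norm_nonneg _) (norm_nonneg _) hP, QL_apply,
    lp.norm_sum_single hP, lp.norm_rpow_eq_tsum hP]
  exact Summable.sum_le_tsum _ (fun i _ => Real.rpow_nonneg (norm_nonneg _) _)
    ((lp.hasSum_norm hP u).summable)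

theorem tendsto_QL (hp' : p ≠ ⊤) (u : Hsp) :
    Filter.Tendsto (fun m => QL p m u) Filter.atTop (nhds u) := by
  have := (lp.hasSum_single hp' u).tendsto_sum_nat
  refine this.congr fun m => ?_
  rw [QL_apply]

theorem norm_flip (hP : 0 < p.toReal) (n : ℕ) (v : Hsp) :
    ‖v - (2:ℝ) • QL p n v‖ = ‖v‖ := by
  have h1 : ‖v - (2:ℝ) • QL p n v‖ ^ p.toReal = ‖v‖ ^ p.toReal := by
    rw [lp.norm_rpow_eq_tsum hP, lp.norm_rpow_eq_tsum hP]
    refine tsum_congr fun j => ?_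
    have : (v - (2:ℝ) • QL p n v : Hsp) j = v j - 2 * ((QL p n v : ∀ _ : ℕ, ℝ) j) := by
      rw [lp.coeFn_sub, Pi.sub_apply, lp.coeFn_smul, Pi.smul_apply, smul_eq_mul]
    rw [this, QL_coord]
    by_cases hj : j < n
    · rw [if_pos hj]
      congr 1
      simp only [Real.norm_eq_abs]
      rw [show (v j : ℝ) - 2 * v j = -(v j) by ring, abs_neg]
    · rw [if_neg hj]
      norm_num
  exact Real.rpow_left_injOn hP.ne' (Set.mem_setOf.2 (norm_nonneg _))
    (Set.mem_setOf.2 (norm_nonneg _)) h1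

theorem norm_add_rpow (hP : 0 < p.toReal) (m : ℕ) (u v : Hsp)
    (hu : QL p m u = u) (hv : QL p m v = 0) :
    ‖u + v‖ ^ p.toReal = ‖u‖ ^ p.toReal + ‖v‖ ^ p.toReal := by
  have hu' : ∀ j, ¬ j < m → u j = 0 := by
    intro j hj
    have := congrArg (fun w : Hsp => (w : ∀ _ : ℕ, ℝ) j) hu
    simpa [QL_coord, if_neg hj] using this.symm
  have hv' : ∀ j, j < m → v j = 0 := by
    intro j hj
    have := congrArg (fun w : Hsp => (w : ∀ _ : ℕ, ℝ) j) hv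
    simp only [QL_coord, if_pos hj] at this
    simpa using this
  rw [lp.norm_rpow_eq_tsum hP, lp.norm_rpow_eq_tsum hP, lp.norm_rpow_eq_tsum hP]
  rw [← Summable.tsum_add ((lp.hasSum_norm hP u).summable) ((lp.hasSum_norm hP v).summable)]
  refine tsum_congr fun j => ?_
  have hadd : (u + v : Hsp) j = u j + v j := by rw [lp.coeFn_add, Pi.add_apply]
  rw [hadd]
  by_cases hj : j < m
  · rw [hv' j hj]
    simp [Real.zero_rpow hP.ne']
  · rw [hu' j hj]
    simp [Real.zero_rpow hP.ne']

end RealExp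


section Tail

theorem exists_near_norm {Y : Type*} [NormedAddCommGroup Y] [NormedSpace ℝ Y]
    (ψ : Y →L[ℝ] ℝ) {δ : ℝ} (hδ : 0 < δ) : ∃ u : Y, ‖u‖ ≤ 1 ∧ ‖ψ‖ - δ ≤ ψ u := by
  by_cases h : ‖ψ‖ ≤ δ
  · exact ⟨0, by simp, by simp only [map_zero]; linarith⟩
  push_neg at h
  have h2 : ¬ ∀ u : Y, ‖ψ u‖ ≤ (‖ψ‖ - δ) * ‖u‖ := by
    intro hb
    have := ContinuousLinearMap.opNorm_le_bound ψ (by linarith) hb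
    linarith
  push_neg at h2
  obtain ⟨u, hu⟩ := h2
  have hu0 : u ≠ 0 := by
    rintro rfl
    simp only [norm_zero, mul_zero, map_zero] at hu
    exact lt_irrefl _ hu
  have hn : (0:ℝ) < ‖u‖ := norm_pos_iff.2 hu0
  set v : Y := ‖u‖⁻¹ • u with hv
  have hψv : ‖ψ‖ - δ < ‖ψ v‖ := by
    have : ‖ψ v‖ = ‖u‖⁻¹ * ‖ψ u‖ := by
      rw [hv, map_smul, smul_eq_mul, norm_mul, norm_inv, norm_norm]
    rw [this, inv_mul_eq_div, lt_div_iff₀ hn]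
    exact hu
  have hnv : ‖v‖ = 1 := norm_smul_inv_norm hu0
  rcases le_or_gt 0 (ψ v) with hs | hs
  · refine ⟨v, hnv.le, ?_⟩
    rw [Real.norm_eq_abs, abs_of_nonneg hs] at hψv
    exact hψv.le
  · refine ⟨-v, by rw [norm_neg, hnv], ?_⟩
    rw [map_neg]
    rw [Real.norm_eq_abs, abs_of_neg hs] at hψv
    linarith

/-- Key Hölder-type inequality: the head and tail of a functional on `ℓ^p` satisfy
`‖head‖^q + ‖tail‖^q ≤ ‖φ‖^q` where `q` is the conjugate exponent. -/
theorem key_holder (hP : 1 < p.toReal) (φ : Hsp →L[ℝ] ℝ) (m : ℕ) :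
    ‖φ.comp (QL p m)‖ ^ (p.toReal / (p.toReal - 1))
      + ‖φ - φ.comp (QL p m)‖ ^ (p.toReal / (p.toReal - 1)) ≤
    ‖φ‖ ^ (p.toReal / (p.toReal - 1)) := by
  set P := p.toReal with hPdef
  have hP0 : 0 < P := lt_trans one_pos hP
  set q : ℝ := P / (P - 1) with hqdef
  have hq0 : 0 < q := div_pos hP0 (by linarith)
  have hq1 : 0 < q - 1 := by
    rw [hqdef, sub_pos, lt_div_iff₀ (by linarith : (0:ℝ) < P - 1)]
    linarith
  have hP1 : P - 1 ≠ 0 := by intro h; rw [sub_eq_zero] at h; rw [← h] at hP; linarith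
  have hqm1 : q - 1 = 1 / (P - 1) := by
    rw [hqdef]
    field_simp
    ring
  have hqP : (q - 1) * P = q := by
    rw [hqm1, hqdef]
    field_simp
  have hPq : P⁻¹ + q⁻¹ = 1 := by
    rw [hqdef, inv_div]
    field_simp
    ring
  set s : ℝ := ‖φ.comp (QL p m)‖ with hsdef
  set t : ℝ := ‖φ - φ.comp (QL p m)‖ with htdef
  have hs0 : 0 ≤ s := norm_nonneg _
  have ht0 : 0 ≤ t := norm_nonneg _
  set A : ℝ := s ^ q + t ^ q with hAdef
  have hA0 : 0 ≤ A := add_nonneg (Real.rpow_nonneg hs0 _) (Real.rpow_nonneg ht0 _)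
  rcases eq_or_lt_of_le hA0 with hA | hA
  · rw [← hA]
    exact Real.rpow_nonneg (norm_nonneg _) _
  -- main step: A - δ * (s^(q-1) + t^(q-1)) ≤ ‖φ‖ * A ^ P⁻¹ for all δ > 0
  have step : ∀ δ : ℝ, 0 < δ → A - δ * (s ^ (q-1) + t ^ (q-1)) ≤ ‖φ‖ * A ^ P⁻¹ := by
    intro δ hδ
    obtain ⟨u, hu1, hu2⟩ := exists_near_norm (φ.comp (QL p m)) hδ
    obtain ⟨v, hv1, hv2⟩ := exists_near_norm (φ - φ.comp (QL p m)) hδ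
    set u' : Hsp := QL p m u with hu'def
    set v' : Hsp := v - QL p m v with hv'def
    have hu'n : ‖u'‖ ≤ 1 := le_trans (norm_QL_le p hP0 m u) hu1
    have hv'n : ‖v'‖ ≤ 1 := le_trans (norm_QL_sub_le p hP0 m v) hv1
    have hu'Q : QL p m u' = u' := QL_QL p le_rfl u
    have hv'Q : QL p m v' = 0 := by
      rw [hv'def, map_sub, QL_QL p le_rfl v, sub_self]
    have hφu' : s - δ ≤ φ u' := hu2
    have hφv' : t - δ ≤ φ v' := by
      have : (φ - φ.comp (QL p m)) v = φ v' := by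
        rw [hv'def, map_sub]
        rfl
      rwa [this] at hv2
    set w : Hsp := s ^ (q-1) • u' + t ^ (q-1) • v' with hwdef
    have hwQ1 : QL p m (s ^ (q-1) • u') = s ^ (q-1) • u' := by rw [map_smul, hu'Q]
    have hwQ2 : QL p m (t ^ (q-1) • v') = 0 := by rw [map_smul, hv'Q, smul_zero]
    have hwnorm : ‖w‖ ^ P ≤ A := by
      rw [hwdef, norm_add_rpow p hP0 m _ _ hwQ1 hwQ2, norm_smul, norm_smul,
        Real.mul_rpow (norm_nonneg _) (norm_nonneg _),
        Real.mul_rpow (norm_nonneg _) (norm_nonneg _)]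
      have e1 : ‖s ^ (q-1)‖ ^ P = s ^ ((q-1)*P) := by
        rw [Real.norm_eq_abs, abs_of_nonneg (Real.rpow_nonneg hs0 _), ← Real.rpow_mul hs0]
      have e2 : ‖t ^ (q-1)‖ ^ P = t ^ ((q-1)*P) := by
        rw [Real.norm_eq_abs, abs_of_nonneg (Real.rpow_nonneg ht0 _), ← Real.rpow_mul ht0]
      rw [e1, e2, hqP, hAdef]
      have b1 : ‖u'‖ ^ P ≤ 1 := Real.rpow_le_one (norm_nonneg _) hu'n hP0.le
      have b2 : ‖v'‖ ^ P ≤ 1 := Real.rpow_le_one (norm_nonneg _) hv'n hP0.le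
      nlinarith [Real.rpow_nonneg hs0 q, Real.rpow_nonneg ht0 q,
        Real.rpow_nonneg (norm_nonneg u') P, Real.rpow_nonneg (norm_nonneg v') P]
    have hwle : ‖w‖ ≤ A ^ P⁻¹ := by
      have := Real.rpow_le_rpow (Real.rpow_nonneg (norm_nonneg w) P) hwnorm
        (inv_nonneg.2 hP0.le)
      rwa [Real.rpow_rpow_inv (norm_nonneg w) hP0.ne'] at this
    have hφw : s ^ q + t ^ q - δ * (s ^ (q-1) + t ^ (q-1)) ≤ φ w := by
      rw [hwdef, map_add, map_smul, map_smul, smul_eq_mul, smul_eq_mul]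
      have es : s ^ (q-1) * s = s ^ q := by
        rcases eq_or_lt_of_le hs0 with h0 | h0
        · rw [← h0, Real.zero_rpow (by linarith : q - 1 ≠ 0),
            Real.zero_rpow hq0.ne', zero_mul]
        · rw [← Real.rpow_add_one h0.ne' (q-1), sub_add_cancel]
      have et : t ^ (q-1) * t = t ^ q := by
        rcases eq_or_lt_of_le ht0 with h0 | h0
        · rw [← h0, Real.zero_rpow (by linarith : q - 1 ≠ 0),
            Real.zero_rpow hq0.ne', zero_mul]
        · rw [← Real.rpow_add_one h0.ne' (q-1), sub_add_cancel]
      have hs1 : 0 ≤ s ^ (q-1) := Real.rpow_nonneg hs0 _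
      have ht1 : 0 ≤ t ^ (q-1) := Real.rpow_nonneg ht0 _
      nlinarith [mul_le_mul_of_nonneg_left hφu' hs1, mul_le_mul_of_nonneg_left hφv' ht1]
    have hφwb : φ w ≤ ‖φ‖ * A ^ P⁻¹ := by
      calc φ w ≤ ‖φ w‖ := le_abs_self _
        _ ≤ ‖φ‖ * ‖w‖ := φ.le_opNorm w
        _ ≤ ‖φ‖ * A ^ P⁻¹ := mul_le_mul_of_nonneg_left hwle (norm_nonneg φ)
    rw [hAdef]
    linarith
  -- pass to the limit δ → 0
  have hstep : A ≤ ‖φ‖ * A ^ P⁻¹ := by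
    by_contra hcon
    push_neg at hcon
    set ε : ℝ := A - ‖φ‖ * A ^ P⁻¹ with hεdef
    have hε : 0 < ε := by rw [hεdef]; exact sub_pos.2 hcon
    have hd : 0 < ε / (s ^ (q-1) + t ^ (q-1) + 1) := by
      have hs1 : 0 ≤ s ^ (q-1) := Real.rpow_nonneg hs0 _
      have ht1 : 0 ≤ t ^ (q-1) := Real.rpow_nonneg ht0 _
      positivity
    have := step _ hd
    have hs1 : 0 ≤ s ^ (q-1) := Real.rpow_nonneg hs0 _
    have ht1 : 0 ≤ t ^ (q-1) := Real.rpow_nonneg ht0 _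
    have hlt : ε / (s ^ (q-1) + t ^ (q-1) + 1) * (s ^ (q-1) + t ^ (q-1)) < ε := by
      rw [div_mul_eq_mul_div, div_lt_iff₀ (by linarith)]
      nlinarith
    linarith
  -- conclude
  have hA1 : A ^ q⁻¹ ≤ ‖φ‖ := by
    have hsplit : A = A ^ q⁻¹ * A ^ P⁻¹ := by
      rw [← Real.rpow_add hA, add_comm, hPq]
      norm_num [hPq]
    nlinarith [Real.rpow_pos_of_pos hA P⁻¹, hstep, hsplit]
  calc A = (A ^ q⁻¹) ^ q := (Real.rpow_inv_rpow hA0 hq0.ne').symm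
    _ ≤ ‖φ‖ ^ q := Real.rpow_le_rpow (Real.rpow_nonneg hA0 _) hA1 hq0.le

end Tail


section TailSmall

theorem tail_mono (hP : 0 < p.toReal) (φ : Hsp →L[ℝ] ℝ) {m₀ m : ℕ} (h : m₀ ≤ m) :
    ‖φ - φ.comp (QL p m)‖ ≤ ‖φ - φ.comp (QL p m₀)‖ := by
  refine ContinuousLinearMap.opNorm_le_bound _ (norm_nonneg _) fun u => ?_
  have e : (φ - φ.comp (QL p m)) u = (φ - φ.comp (QL p m₀)) (u - QL p m u) := by
    simp only [ContinuousLinearMap.sub_apply, ContinuousLinearMap.comp_apply]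
    rw [map_sub (QL p m₀), QL_QL p h u, sub_self, map_sub φ]
    simp
  rw [e]
  calc ‖(φ - φ.comp (QL p m₀)) (u - QL p m u)‖
      ≤ ‖φ - φ.comp (QL p m₀)‖ * ‖u - QL p m u‖ := ContinuousLinearMap.le_opNorm _ _
    _ ≤ ‖φ - φ.comp (QL p m₀)‖ * ‖u‖ :=
        mul_le_mul_of_nonneg_left (norm_QL_sub_le p hP m u) (norm_nonneg _)

theorem tail_small (hP : 1 < p.toReal) (hp' : p ≠ ⊤) (φ : Hsp →L[ℝ] ℝ) {ε : ℝ}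
    (hε : 0 < ε) : ∃ m₀ : ℕ, ∀ m, m₀ ≤ m → ‖φ - φ.comp (QL p m)‖ ≤ ε := by
  have hP0 : 0 < p.toReal := lt_trans one_pos hP
  suffices h : ∃ m₀, ‖φ - φ.comp (QL p m₀)‖ ≤ ε by
    obtain ⟨m₀, hm⟩ := h
    exact ⟨m₀, fun m hm' => le_trans (tail_mono p hP0 φ hm') hm⟩
  by_contra hcon
  push_neg at hcon
  set q : ℝ := p.toReal / (p.toReal - 1) with hqdef
  have hq0 : 0 < q := div_pos hP0 (by linarith)
  have hεq : ∀ m, ε ^ q ≤ ‖φ - φ.comp (QL p m)‖ ^ q := fun m =>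
    Real.rpow_le_rpow hε.le (hcon m).le hq0.le
  have hkey : ∀ m, ‖φ.comp (QL p m)‖ ^ q ≤ ‖φ‖ ^ q - ε ^ q := fun m => by
    have h1 := key_holder p hP φ m
    have h2 := hεq m
    rw [← hqdef] at h1
    linarith
  have hne : 0 ≤ ‖φ‖ ^ q - ε ^ q := by
    have h1 := hkey 0
    have h2 : 0 ≤ ‖φ.comp (QL p 0)‖ ^ q := Real.rpow_nonneg (norm_nonneg _) q
    linarith
  set B : ℝ := (‖φ‖ ^ q - ε ^ q) ^ q⁻¹ with hBdef
  have hBnn : 0 ≤ B := Real.rpow_nonneg hne _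
  have hcompB : ∀ m, ‖φ.comp (QL p m)‖ ≤ B := fun m => by
    have h2 := Real.rpow_le_rpow (Real.rpow_nonneg (norm_nonneg (φ.comp (QL p m))) q)
      (hkey m) (inv_nonneg.2 hq0.le)
    rwa [Real.rpow_rpow_inv (norm_nonneg _) hq0.ne'] at h2
  have hφB : ‖φ‖ ≤ B := by
    refine ContinuousLinearMap.opNorm_le_bound φ hBnn fun u => ?_
    have hlim : Filter.Tendsto (fun m => ‖φ (QL p m u)‖) Filter.atTop (nhds ‖φ u‖) :=
      ((φ.continuous.tendsto u).comp (tendsto_QL p hp' u)).norm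
    refine le_of_tendsto hlim (Filter.Eventually.of_forall fun m => ?_)
    calc ‖φ (QL p m u)‖ = ‖(φ.comp (QL p m)) u‖ := rfl
      _ ≤ ‖φ.comp (QL p m)‖ * ‖u‖ := ContinuousLinearMap.le_opNorm _ _
      _ ≤ B * ‖u‖ := mul_le_mul_of_nonneg_right (hcompB m) (norm_nonneg _)
  have hBq : B ^ q = ‖φ‖ ^ q - ε ^ q := Real.rpow_inv_rpow hne hq0.ne'
  have hmono : ‖φ‖ ^ q ≤ B ^ q := Real.rpow_le_rpow (norm_nonneg φ) hφB hq0.le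
  have hεpos : 0 < ε ^ q := Real.rpow_pos_of_pos hε q
  linarith

end TailSmall


section Mat

/-- Index type for rational finite matrices. -/
def MatIdx : Type := Σ n m : ℕ, Fin n → Fin m → ℚ

instance : Countable MatIdx := by
  unfold MatIdx
  infer_instance

/-- Elementary matrix operator `u ↦ u j • e i`. -/
def eOp (i j : ℕ) : Hsp →L[ℝ] Hsp := (coordL p j).smulRight (lp.single p i 1)

/-- The operator attached to a rational finite matrix. -/
def matOp (x : MatIdx) : Hsp →L[ℝ] Hsp :=
  ∑ i : Fin x.1, ∑ j : Fin x.2.1, ((x.2.2 i j : ℝ)) • eOp p i j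

theorem single_eq_smul (j : ℕ) (r : ℝ) : (lp.single p j r : Hsp) = r • (lp.single p j 1 : Hsp) := by
  rw [← lp.single_smul]
  norm_num

theorem matOp_apply (x : MatIdx) (u : Hsp) :
    matOp p x u = ∑ i : Fin x.1, ∑ j : Fin x.2.1,
      ((x.2.2 i j : ℝ) * u j) • lp.single p (i : ℕ) 1 := by
  simp only [matOp, ContinuousLinearMap.sum_apply, ContinuousLinearMap.smul_apply,
    eOp, ContinuousLinearMap.smulRight_apply, coordL_apply, smul_smul]

theorem matOp_finiteRank (x : MatIdx) :
    FiniteDimensional ℝ (LinearMap.range (matOp p x : Hsp →L[ℝ] Hsp).toLinearMap) := by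
  set S : Submodule ℝ Hsp :=
    Submodule.span ℝ (Set.range fun i : Fin x.1 => (lp.single p (i : ℕ) 1 : Hsp)) with hS
  have hfin : FiniteDimensional ℝ S :=
    FiniteDimensional.span_of_finite ℝ (Set.finite_range _)
  have hle : LinearMap.range (matOp p x : Hsp →L[ℝ] Hsp).toLinearMap ≤ S := by
    rintro y ⟨u, rfl⟩
    have : (matOp p x : Hsp →L[ℝ] Hsp).toLinearMap u = matOp p x u := rfl
    rw [this, matOp_apply]
    refine Submodule.sum_mem _ fun i _ => Submodule.sum_mem _ fun j _ => ?_
    exact Submodule.smul_mem _ _ (Submodule.subset_span ⟨i, rfl⟩)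
  exact Submodule.finiteDimensional_of_le hle

theorem norm_single_one (hP0 : 0 < p.toReal) (i : ℕ) :
    ‖(lp.single p i 1 : Hsp)‖ = 1 := by
  have := lp.norm_single (E := fun _ : ℕ => ℝ) (pos_iff_ne_zero.2 (p_ne_zero p)) i (1:ℝ)
  simpa using this

theorem norm_QL_le_sum (hP0 : 0 < p.toReal) (n : ℕ) (w : Hsp) :
    ‖QL p n w‖ ≤ ∑ i ∈ Finset.range n, ‖w i‖ := by
  rw [QL_apply]
  refine le_trans (norm_sum_le _ _) (le_of_eq ?_)
  refine Finset.sum_congr rfl fun i _ => ?_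
  exact lp.norm_single (E := fun _ : ℕ => ℝ) (pos_iff_ne_zero.2 (p_ne_zero p)) i (w i)

end Mat


section Main

theorem exists_center (hp1 : 1 < p) (hp2 : p < ⊤) (T : Hsp →L[ℝ] Hsp) (hT : ‖T‖ = 1) :
    ∃ x : MatIdx, ‖T - matOp p x‖ ≤ 9/8 ∧ 13/8 < ‖matOp p x‖ := by
  have hP : 1 < p.toReal := by
    rw [← ENNReal.toReal_one]
    exact (ENNReal.toReal_lt_toReal ENNReal.one_ne_top hp2.ne).2 hp1
  have hP0 : 0 < p.toReal := lt_trans one_pos hP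
  -- Step 1: a unit vector `y` with `31/32 < ‖T y‖`
  obtain ⟨y, hy1, hy2⟩ : ∃ y : Hsp, ‖y‖ = 1 ∧ 31/32 < ‖T y‖ := by
    have h2 : ¬ ∀ u : Hsp, ‖T u‖ ≤ (31/32) * ‖u‖ := by
      intro hb
      have := ContinuousLinearMap.opNorm_le_bound T (by norm_num) hb
      rw [hT] at this
      norm_num at this
    push_neg at h2
    obtain ⟨u, hu⟩ := h2
    have hu0 : u ≠ 0 := by
      rintro rfl
      simp only [norm_zero, mul_zero, map_zero] at hu
      exact lt_irrefl _ hu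
    have hn : (0:ℝ) < ‖u‖ := norm_pos_iff.2 hu0
    refine ⟨‖u‖⁻¹ • u, norm_smul_inv_norm hu0, ?_⟩
    rw [map_smul, norm_smul, norm_inv, norm_norm, inv_mul_eq_div, lt_div_iff₀ hn]
    exact hu
  -- Step 2: `n` with `15/16 < ‖QL p n ∘L T‖`
  obtain ⟨n, hn⟩ : ∃ n : ℕ, 15/16 < ‖QL p n (T y)‖ := by
    have hlim : Filter.Tendsto (fun k => ‖QL p k (T y)‖) Filter.atTop (nhds ‖T y‖) :=
      (tendsto_QL p hp2.ne (T y)).norm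
    rw [Metric.tendsto_atTop] at hlim
    obtain ⟨N, hN⟩ := hlim (‖T y‖ - 15/16) (by linarith)
    refine ⟨N, ?_⟩
    have := hN N le_rfl
    rw [Real.dist_eq] at this
    have := abs_lt.1 this
    linarith [this.1]
  have hQT : 15/16 < ‖(QL p n).comp T‖ := by
    have h1 : ‖QL p n (T y)‖ ≤ ‖(QL p n).comp T‖ := by
      have := ((QL p n).comp T).le_opNorm y
      rw [hy1, mul_one] at this
      exact this
    linarith
  -- Step 3: pick `m` making all the first `n` rows have small tails
  set ε₁ : ℝ := 1/(64*(n+1)) with hε₁def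
  have hε₁ : 0 < ε₁ := by positivity
  have htails : ∀ i : ℕ, ∃ m₀ : ℕ, ∀ m, m₀ ≤ m →
      ‖(coordL p i).comp T - ((coordL p i).comp T).comp (QL p m)‖ ≤ ε₁ := fun i =>
    tail_small p hP hp2.ne ((coordL p i).comp T) hε₁
  choose f hf using htails
  set m : ℕ := (Finset.range n).sup f with hmdef
  have hfm : ∀ i, i < n →
      ‖(coordL p i).comp T - ((coordL p i).comp T).comp (QL p m)‖ ≤ ε₁ := fun i hi =>
    hf i m (Finset.le_sup (Finset.mem_range.2 hi))
  -- Step 4: tail bound for the truncated operator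
  have hB2 : ‖(2:ℝ) • ((QL p n).comp T) - (2:ℝ) • (((QL p n).comp T).comp (QL p m))‖
      ≤ 1/32 := by
    refine ContinuousLinearMap.opNorm_le_bound _ (by norm_num) fun u => ?_
    have e : ((2:ℝ) • ((QL p n).comp T) - (2:ℝ) • (((QL p n).comp T).comp (QL p m))) u
        = (2:ℝ) • (QL p n (T u - T (QL p m u))) := by
      simp only [ContinuousLinearMap.sub_apply, ContinuousLinearMap.smul_apply,
        ContinuousLinearMap.comp_apply, map_sub, smul_sub]
    rw [e, norm_smul]
    have h1 : ‖QL p n (T u - T (QL p m u))‖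
        ≤ ∑ i ∈ Finset.range n, ‖(T u - T (QL p m u) : Hsp) i‖ :=
      norm_QL_le_sum p hP0 n _
    have h2 : ∀ i ∈ Finset.range n, ‖(T u - T (QL p m u) : Hsp) i‖ ≤ ε₁ * ‖u‖ := by
      intro i hi
      have e2 : (T u - T (QL p m u) : Hsp) i
          = ((coordL p i).comp T - ((coordL p i).comp T).comp (QL p m)) u := by
        simp only [ContinuousLinearMap.sub_apply, ContinuousLinearMap.comp_apply,
          coordL_apply, lp.coeFn_sub, Pi.sub_apply]
      rw [e2]
      calc ‖((coordL p i).comp T - ((coordL p i).comp T).comp (QL p m)) u‖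
          ≤ ‖(coordL p i).comp T - ((coordL p i).comp T).comp (QL p m)‖ * ‖u‖ :=
            ContinuousLinearMap.le_opNorm _ _
        _ ≤ ε₁ * ‖u‖ :=
            mul_le_mul_of_nonneg_right (hfm i (Finset.mem_range.1 hi)) (norm_nonneg _)
    have h3 : ∑ i ∈ Finset.range n, ‖(T u - T (QL p m u) : Hsp) i‖
        ≤ n * (ε₁ * ‖u‖) := by
      refine le_trans (Finset.sum_le_sum h2) (le_of_eq ?_)
      rw [Finset.sum_const, Finset.card_range, nsmul_eq_mul]
    have hne : (n : ℝ) * ε₁ ≤ 1/64 := by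
      rw [hε₁def]
      rw [mul_one_div, div_le_div_iff₀ (by positivity) (by norm_num)]
      push_cast
      nlinarith [Nat.cast_nonneg (α := ℝ) n]
    have h4 : ‖QL p n (T u - T (QL p m u))‖ ≤ 1/64 * ‖u‖ := by
      refine le_trans (le_trans h1 h3) ?_
      rw [← mul_assoc]
      exact mul_le_mul_of_nonneg_right hne (norm_nonneg u)
    rw [Real.norm_ofNat]
    linarith [norm_nonneg u]
  -- Step 5: rational matrix approximation
  set ε₂ : ℝ := 1/(64*(n*m+1)) with hε₂def
  have hε₂ : 0 < ε₂ := by positivity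
  have hrat : ∀ i j : ℕ, ∃ q : ℚ, |2 * ((T (lp.single p j 1) : ∀ _ : ℕ, ℝ) i) - (q:ℝ)| < ε₂ :=
    fun i j => exists_rat_near _ hε₂
  choose b hb using hrat
  set x : MatIdx := ⟨n, m, fun i j => b i j⟩ with hxdef
  set c : Hsp →L[ℝ] Hsp := matOp p x with hcdef
  -- apply formula for c
  have e2 : ∀ u : Hsp, c u = ∑ i ∈ Finset.range n, ∑ j ∈ Finset.range m,
      ((b i j : ℝ) * u j) • (lp.single p i 1 : Hsp) := by
    intro u
    rw [hcdef, matOp_apply]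
    rw [← Fin.sum_univ_eq_sum_range
      (fun i => ∑ j ∈ Finset.range m, ((b i j : ℝ) * u j) • (lp.single p i 1 : Hsp)) n]
    refine Finset.sum_congr rfl fun i _ => ?_
    rw [← Fin.sum_univ_eq_sum_range (fun j => ((b i j : ℝ) * u j) • (lp.single p (i:ℕ) 1 : Hsp)) m]
  -- apply formula for the doubled truncation
  have e1 : ∀ u : Hsp, ((2:ℝ) • (((QL p n).comp T).comp (QL p m))) u
      = ∑ i ∈ Finset.range n, ∑ j ∈ Finset.range m,
        (2 * (T (lp.single p j 1) : ∀ _ : ℕ, ℝ) i * u j) • (lp.single p i 1 : Hsp) := by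
    intro u
    have eQm : T (QL p m u) = ∑ j ∈ Finset.range m, u j • T (lp.single p j 1) := by
      rw [QL_apply, map_sum]
      refine Finset.sum_congr rfl fun j _ => ?_
      rw [single_eq_smul, map_smul]
    have eQn : QL p n (T (QL p m u)) = ∑ j ∈ Finset.range m, u j •
        (∑ i ∈ Finset.range n, ((T (lp.single p j 1) : ∀ _ : ℕ, ℝ) i) • (lp.single p i 1 : Hsp)) := by
      rw [eQm, map_sum]
      refine Finset.sum_congr rfl fun j _ => ?_
      rw [map_smul, QL_apply]
      congr 1
      exact Finset.sum_congr rfl fun i _ => single_eq_smul p i _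
    have estart : ((2:ℝ) • (((QL p n).comp T).comp (QL p m))) u
        = (2:ℝ) • QL p n (T (QL p m u)) := rfl
    rw [estart, eQn, Finset.smul_sum]
    have hterm : ∀ j, (2:ℝ) • (u j •
        (∑ i ∈ Finset.range n, ((T (lp.single p j 1) : ∀ _ : ℕ, ℝ) i) • (lp.single p i 1 : Hsp)))
        = ∑ i ∈ Finset.range n,
          (2 * (T (lp.single p j 1) : ∀ _ : ℕ, ℝ) i * u j) • (lp.single p i 1 : Hsp) := by
      intro j
      rw [Finset.smul_sum, Finset.smul_sum]
      refine Finset.sum_congr rfl fun i _ => ?_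
      rw [smul_smul, smul_smul]
      congr 1
      ring
    rw [Finset.sum_congr rfl fun j _ => hterm j, Finset.sum_comm]
  -- Step 5': bound on the matrix approximation error
  have hB3 : ‖(2:ℝ) • (((QL p n).comp T).comp (QL p m)) - c‖ ≤ 1/64 := by
    refine ContinuousLinearMap.opNorm_le_bound _ (by norm_num) fun u => ?_
    have e3 : ((2:ℝ) • (((QL p n).comp T).comp (QL p m)) - c) u
        = ∑ i ∈ Finset.range n, ∑ j ∈ Finset.range m,
          ((2 * (T (lp.single p j 1) : ∀ _ : ℕ, ℝ) i - (b i j : ℝ)) * u j)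
            • (lp.single p i 1 : Hsp) := by
      rw [ContinuousLinearMap.sub_apply, e1 u, e2 u, ← Finset.sum_sub_distrib]
      refine Finset.sum_congr rfl fun i _ => ?_
      rw [← Finset.sum_sub_distrib]
      refine Finset.sum_congr rfl fun j _ => ?_
      rw [← sub_smul]
      congr 1
      ring
    rw [e3]
    have hb1 : ∀ i j : ℕ,
        ‖((2 * (T (lp.single p j 1) : ∀ _ : ℕ, ℝ) i - (b i j : ℝ)) * u j)
          • (lp.single p i 1 : Hsp)‖ ≤ ε₂ * ‖u‖ := by
      intro i j
      rw [norm_smul, norm_single_one p hP0, mul_one, Real.norm_eq_abs, abs_mul]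
      have h1 : |2 * (T (lp.single p j 1) : ∀ _ : ℕ, ℝ) i - (b i j : ℝ)| ≤ ε₂ := (hb i j).le
      have h2 : |u j| ≤ ‖u‖ := by
        have := lp.norm_apply_le_norm (p_ne_zero p) u j
        simpa using this
      exact mul_le_mul h1 h2 (abs_nonneg _) hε₂.le
    calc ‖∑ i ∈ Finset.range n, ∑ j ∈ Finset.range m,
          ((2 * (T (lp.single p j 1) : ∀ _ : ℕ, ℝ) i - (b i j : ℝ)) * u j)
            • (lp.single p i 1 : Hsp)‖
        ≤ ∑ i ∈ Finset.range n, ∑ j ∈ Finset.range m,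
            ‖((2 * (T (lp.single p j 1) : ∀ _ : ℕ, ℝ) i - (b i j : ℝ)) * u j)
            • (lp.single p i 1 : Hsp)‖ := by
          refine le_trans (norm_sum_le _ _) (Finset.sum_le_sum fun i _ => norm_sum_le _ _)
      _ ≤ ∑ _i ∈ Finset.range n, ∑ _j ∈ Finset.range m, ε₂ * ‖u‖ :=
          Finset.sum_le_sum fun i _ => Finset.sum_le_sum fun j _ => hb1 i j
      _ ≤ 1/64 * ‖u‖ := by
          rw [Finset.sum_const, Finset.sum_const, Finset.card_range, Finset.card_range,
            nsmul_eq_mul, nsmul_eq_mul]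
          rw [show (n:ℝ) * ((m:ℝ) * (ε₂ * ‖u‖)) = ((n:ℝ) * m * ε₂) * ‖u‖ by ring]
          have : (n:ℝ) * m * ε₂ ≤ 1/64 := by
            rw [hε₂def, mul_one_div, div_le_div_iff₀ (by positivity) (by norm_num)]
            push_cast
            nlinarith [mul_nonneg (Nat.cast_nonneg (α := ℝ) n) (Nat.cast_nonneg (α := ℝ) m)]
          exact mul_le_mul_of_nonneg_right this (norm_nonneg u)
  -- Step 6: the flip bound
  have hB1 : ‖T - (2:ℝ) • ((QL p n).comp T)‖ ≤ 1 := by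
    refine ContinuousLinearMap.opNorm_le_bound _ zero_le_one fun u => ?_
    have e : (T - (2:ℝ) • ((QL p n).comp T)) u = T u - (2:ℝ) • QL p n (T u) := rfl
    rw [e, norm_flip p hP0 n (T u), one_mul]
    have := T.le_opNorm u
    rwa [hT, one_mul] at this
  -- Assemble
  have htri1 : ‖T - c‖ ≤ 9/8 := by
    have h1 : T - c = (T - (2:ℝ) • ((QL p n).comp T))
        + ((2:ℝ) • ((QL p n).comp T) - (2:ℝ) • (((QL p n).comp T).comp (QL p m)))
        + ((2:ℝ) • (((QL p n).comp T).comp (QL p m)) - c) := by abel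
    rw [h1]
    calc ‖_ + _ + _‖ ≤ ‖_ + _‖ + ‖_‖ := norm_add_le _ _
      _ ≤ ‖_‖ + ‖_‖ + ‖_‖ := by gcongr; exact norm_add_le _ _
      _ ≤ 1 + 1/32 + 1/64 := by gcongr
      _ ≤ 9/8 := by norm_num
  have hnormc : 13/8 < ‖c‖ := by
    have h2 : (15:ℝ)/8 < ‖(2:ℝ) • ((QL p n).comp T)‖ := by
      rw [norm_smul (2:ℝ) ((QL p n).comp T), Real.norm_ofNat]
      linarith
    have h3 : ‖(2:ℝ) • ((QL p n).comp T) - c‖ ≤ 1/32 + 1/64 := by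
      have h4 : (2:ℝ) • ((QL p n).comp T) - c
          = ((2:ℝ) • ((QL p n).comp T) - (2:ℝ) • (((QL p n).comp T).comp (QL p m)))
          + ((2:ℝ) • (((QL p n).comp T).comp (QL p m)) - c) := by abel
      rw [h4]
      calc ‖_ + _‖ ≤ ‖_‖ + ‖_‖ := norm_add_le _ _
        _ ≤ 1/32 + 1/64 := by gcongr
    have h5 : ‖(2:ℝ) • ((QL p n).comp T)‖ - ‖c‖ ≤ 1/32 + 1/64 :=
      le_trans (le_trans (le_abs_self _) (abs_norm_sub_norm_le _ _)) h3
    linarith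
  exact ⟨x, htri1, hnormc⟩


end Main


section Pack

theorem exists_enum (hp1 : 1 < p) (hp2 : p < ⊤) :
    ∃ g : ℕ → (Hsp →L[ℝ] Hsp),
      (∀ k, FiniteDimensional ℝ (LinearMap.range (g k).toLinearMap) ∧ 13/8 < ‖g k‖) ∧
      (∀ T : Hsp →L[ℝ] Hsp, ‖T‖ = 1 → ∃ k, ‖T - g k‖ ≤ 9/8) := by
  have hP : 1 < p.toReal := by
    rw [← ENNReal.toReal_one]
    exact (ENNReal.toReal_lt_toReal ENNReal.one_ne_top hp2.ne).2 hp1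
  have hP0 : 0 < p.toReal := lt_trans one_pos hP
  set S : Set (Hsp →L[ℝ] Hsp) := {c | (∃ x : MatIdx, matOp p x = c) ∧ 13/8 < ‖c‖} with hS
  have hcount : S.Countable := by
    refine Set.Countable.mono (fun c hc => ?_) (Set.countable_range (matOp p))
    obtain ⟨x, hx⟩ := hc.1
    exact ⟨x, hx⟩
  have hne : S.Nonempty := by
    set x₀ : MatIdx := ⟨1, 1, fun _ _ => 2⟩ with hx₀
    refine ⟨matOp p x₀, ⟨x₀, rfl⟩, ?_⟩
    have happ : matOp p x₀ (lp.single p 0 1) = (2:ℝ) • (lp.single p 0 1 : Hsp) := by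
      rw [matOp_apply]
      simp only [x₀, Fin.sum_univ_one, Fin.val_zero]
      have h0 : ((lp.single p 0 1 : Hsp) : ∀ _ : ℕ, ℝ) 0 = 1 := lp.single_apply_self p 0 1
      rw [h0]
      push_cast
      norm_num
    have hval : ‖matOp p x₀ (lp.single p 0 1)‖ = 2 := by
      rw [happ, norm_smul, norm_single_one p hP0, Real.norm_ofNat, mul_one]
    have := (matOp p x₀).le_opNorm (lp.single p 0 1)
    rw [hval, norm_single_one p hP0, mul_one] at this
    linarith
  obtain ⟨g, hg⟩ := Set.Countable.exists_eq_range hcount hne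
  refine ⟨g, fun k => ?_, fun T hT => ?_⟩
  · have hgk : g k ∈ S := by rw [hg]; exact Set.mem_range_self k
    obtain ⟨⟨x, hx⟩, hnorm⟩ := hgk
    refine ⟨?_, hnorm⟩
    rw [← hx]
    exact matOp_finiteRank p x
  · obtain ⟨x, hx1, hx2⟩ := exists_center p hp1 hp2 T hT
    have hmem : matOp p x ∈ S := ⟨⟨x, rfl⟩, hx2⟩
    rw [hg] at hmem
    obtain ⟨k, hk⟩ := hmem
    exact ⟨k, by rw [hk]; exact hx1⟩

end Pack

end UBCPaux

end UBCPaux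

theorem ubcp_subspace_of_operators_on_lp
    (p : ℝ≥0∞) [Fact (1 ≤ p)] (hp : 1 < p) (hp' : p < ⊤) :
    (∀ E : Subspace ℝ (lp (fun _ : ℕ => ℝ) p →L[ℝ] lp (fun _ : ℕ => ℝ) p),
      (∀ T : lp (fun _ : ℕ => ℝ) p →L[ℝ] lp (fun _ : ℕ => ℝ) p,
        FiniteDimensional ℝ (LinearMap.range T.toLinearMap) → T ∈ E) →
      HasUBCP ↥E) ∧
    HasUBCP (lp (fun _ : ℕ => ℝ) p →L[ℝ] lp (fun _ : ℕ => ℝ) p) := by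
  obtain ⟨g, hg1, hg2⟩ := UBCPaux.exists_enum p hp hp'
  constructor
  · intro E hE
    refine ⟨fun k => ⟨g k, hE (g k) (hg1 k).1⟩, fun _ => 9/8,
      fun k => ⟨by norm_num, ?_⟩, ⟨9/8, fun _ => le_rfl⟩,
      ⟨1/4, by norm_num, fun k => ?_⟩, ?_⟩
    · rw [Submodule.coe_norm]
      have := (hg1 k).2
      simp only
      linarith
    · refine Metric.closedBall_disjoint_closedBall ?_
      rw [Subtype.dist_eq, ZeroMemClass.coe_zero, dist_zero_left]
      have := (hg1 k).2
      simp only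
      linarith
    · intro z hz
      have hz1 : ‖(z : lp (fun _ : ℕ => ℝ) p →L[ℝ] lp (fun _ : ℕ => ℝ) p)‖ = 1 := by
        rw [← Submodule.coe_norm]
        exact mem_sphere_zero_iff_norm.1 hz
      obtain ⟨k, hk⟩ := hg2 _ hz1
      refine Set.mem_iUnion.2 ⟨k, ?_⟩
      rw [Metric.mem_closedBall, Subtype.dist_eq, dist_eq_norm]
      exact hk
  · refine ⟨g, fun _ => 9/8, fun k => ⟨by norm_num, by linarith [(hg1 k).2]⟩,
      ⟨9/8, fun _ => le_rfl⟩,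
      ⟨1/4, by norm_num, fun k => Metric.closedBall_disjoint_closedBall
        (by rw [dist_zero_left]; linarith [(hg1 k).2])⟩, ?_⟩
    intro T hT
    obtain ⟨k, hk⟩ := hg2 T (mem_sphere_zero_iff_norm.1 hT)
    refine Set.mem_iUnion.2 ⟨k, ?_⟩
    rw [Metric.mem_closedBall, dist_eq_norm]
    exact hk
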